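/- arXiv:1110.4439 — 3 statements merged into one kernel-verified Lean document; each statement's English description precedes it below -/
import Mathlib

section
/- Let l, m, n be positive integers, Q : Fin l → Fin m → ℤ an integer matrix, and v : Fin m → (Fin n → ℤ) a family of integer vectors satisfying the relations Σ_{i ∈ Fin m} (Q a i) · (v i) = 0 in ℤ^n for every a ∈ Fin l. Let U = {A : Fin m → ℂ | A i ≠ 0 for all i} and define the monomial map y : U → (Fin l → ℂ) by y(A) a = ∏_{i} (A i)^{Q a i} (integer powers of nonzero complex numbers). Let W be an open subset of Fin l → ℂ, let Ψ be complex-analytic on W, and set Φ = Ψ ∘ y on U′ = {A ∈ U | y(A) ∈ W}. Then Φ satisfies the first set of GKZ equations: for every j ∈ Fin n and every A ∈ U′, Σ_{i ∈ Fin m} (v i j) · (A i) · (∂_i Φ)(A) = 0. -/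
/-- First set of GKZ equations: if the relations `Σ_i (Q a i) · v i = 0` hold for every
`a`, `y(A)_a = ∏_i (A i)^{Q a i}` on the torus `{A | ∀ i, A i ≠ 0}`, `Ψ` is analytic on
an open set `W`, and `Φ = Ψ ∘ y`, then for every `j` and every `A` in the torus with
`y(A) ∈ W` one has `Σ_i (v i j) · A i · ∂_i Φ (A) = 0`. -/
theorem stmt3 (l m n : ℕ) (hl : 0 < l) (hm : 0 < m) (hn : 0 < n)
    (Q : Fin l → Fin m → ℤ) (v : Fin m → Fin n → ℤ)
    (hrel : ∀ (a : Fin l) (j : Fin n), ∑ i, Q a i * v i j = 0)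
    (y : (Fin m → ℂ) → (Fin l → ℂ))
    (hy : ∀ (A : Fin m → ℂ) (a : Fin l), y A a = ∏ i, (A i) ^ (Q a i))
    (W : Set (Fin l → ℂ)) (hW : IsOpen W) (Ψ : (Fin l → ℂ) → ℂ)
    (hΨ : AnalyticOnNhd ℂ Ψ W)
    (j : Fin n) (A : Fin m → ℂ) (hA : ∀ i, A i ≠ 0) (hAW : y A ∈ W) :
    ∑ i, (v i j : ℂ) * (A i * fderiv ℂ (Ψ ∘ y) A (Pi.single i 1)) = 0 := by
  classical
  have hyg : y = fun B a => ∏ i, (B i) ^ (Q a i) := by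
    funext B a; exact hy B a
  -- derivative of each factor
  have hfact : ∀ (a : Fin l) (i : Fin m),
      HasFDerivAt (fun B : Fin m → ℂ => B i ^ Q a i)
        (((Q a i : ℂ) * A i ^ (Q a i - 1)) •
          (ContinuousLinearMap.proj i : (Fin m → ℂ) →L[ℂ] ℂ)) A := by
    intro a i
    exact (hasDerivAt_zpow (Q a i) (A i) (Or.inl (hA i))).comp_hasFDerivAt (f := fun B : Fin m → ℂ => B i) A
      (hasFDerivAt_apply i A)
  -- derivative of each component of y
  set L : Fin l → ((Fin m → ℂ) →L[ℂ] ℂ) := fun a =>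
    ∑ i, (∏ k ∈ Finset.univ.erase i, A k ^ Q a k) •
      (((Q a i : ℂ) * A i ^ (Q a i - 1)) •
        (ContinuousLinearMap.proj i : (Fin m → ℂ) →L[ℂ] ℂ)) with hL
  have hcomp : ∀ a : Fin l,
      HasFDerivAt (fun B : Fin m → ℂ => ∏ i, B i ^ Q a i) (L a) A := by
    intro a
    exact HasFDerivAt.finset_prod (fun i _ => hfact a i)
  have hyd : HasFDerivAt y (ContinuousLinearMap.pi L) A := by
    rw [hyg]
    exact hasFDerivAt_pi.2 hcomp
  have hΨd : HasFDerivAt Ψ (fderiv ℂ Ψ (y A)) (y A) :=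
    ((hΨ (y A) hAW).differentiableAt).hasFDerivAt
  have hΦd : HasFDerivAt (Ψ ∘ y) ((fderiv ℂ Ψ (y A)).comp (ContinuousLinearMap.pi L)) A :=
    hΨd.comp A hyd
  rw [hΦd.fderiv]
  set D := fderiv ℂ Ψ (y A) with hD
  -- value of L a on Pi.single i 1
  have hLval : ∀ (a : Fin l) (i : Fin m),
      L a (Pi.single i 1) =
        (∏ k ∈ Finset.univ.erase i, A k ^ Q a k) * ((Q a i : ℂ) * A i ^ (Q a i - 1)) := by
    intro a i
    rw [hL]
    simp only [ContinuousLinearMap.sum_apply, ContinuousLinearMap.smul_apply,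
      ContinuousLinearMap.proj_apply, smul_eq_mul]
    rw [Finset.sum_eq_single i]
    · simp
    · intro b _ hb
      simp [Pi.single_eq_of_ne hb]
    · simp
  -- key: A i * L a (single i 1) = Q a i * y A a
  have hkey : ∀ (a : Fin l) (i : Fin m),
      A i * L a (Pi.single i 1) = (Q a i : ℂ) * y A a := by
    intro a i
    rw [hLval, hy]
    have h1 : A i * A i ^ (Q a i - 1) = A i ^ Q a i := by
      rw [mul_comm, ← zpow_add_one₀ (hA i)]; ring_nf
    have h2 : (∏ k ∈ Finset.univ.erase i, A k ^ Q a k) * A i ^ Q a i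
        = ∏ k, A k ^ Q a k :=
      Finset.prod_erase_mul _ _ (Finset.mem_univ i)
    calc A i * ((∏ k ∈ Finset.univ.erase i, A k ^ Q a k) * ((Q a i : ℂ) * A i ^ (Q a i - 1)))
        = (Q a i : ℂ) * ((∏ k ∈ Finset.univ.erase i, A k ^ Q a k) * (A i * A i ^ (Q a i - 1))) := by
          ring
      _ = (Q a i : ℂ) * ∏ k, A k ^ Q a k := by rw [h1, h2]
  -- express D applied to the vector as a sum over a
  have hDval : ∀ u : Fin l → ℂ, D u = ∑ a, u a * D (Pi.single a 1) := by
    intro u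
    have hu : u = ∑ a, u a • (Pi.single a (1 : ℂ) : Fin l → ℂ) := by
      funext b
      simp [Finset.sum_apply, Pi.single_apply]
    conv_lhs => rw [hu]
    rw [map_sum]
    simp [smul_eq_mul]
  have hterm : ∀ i : Fin m,
      A i * ((D.comp (ContinuousLinearMap.pi L)) (Pi.single i 1))
        = ∑ a, (Q a i : ℂ) * y A a * D (Pi.single a 1) := by
    intro i
    rw [ContinuousLinearMap.comp_apply]
    have : (ContinuousLinearMap.pi L) (Pi.single i 1) = fun a => L a (Pi.single i 1) := by
      funext a; simp
    rw [this, hDval, Finset.mul_sum]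
    refine Finset.sum_congr rfl fun a _ => ?_
    rw [← mul_assoc, hkey]
  simp only [hD] at hterm
  calc ∑ i, (v i j : ℂ) * (A i * (D.comp (ContinuousLinearMap.pi L)) (Pi.single i 1))
      = ∑ i, ∑ a, (v i j : ℂ) * ((Q a i : ℂ) * y A a * D (Pi.single a 1)) := by
        refine Finset.sum_congr rfl fun i _ => ?_
        rw [hterm i, Finset.mul_sum]
    _ = ∑ a, (∑ i, (Q a i : ℂ) * (v i j : ℂ)) * (y A a * D (Pi.single a 1)) := by
        rw [Finset.sum_comm]
        refine Finset.sum_congr rfl fun a _ => ?_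
        rw [Finset.sum_mul]
        exact Finset.sum_congr rfl fun i _ => by ring
    _ = 0 := by
        refine Finset.sum_eq_zero fun a _ => ?_
        have := hrel a j
        have hc : (∑ i, (Q a i : ℂ) * (v i j : ℂ)) = 0 := by
          have h2 : ((∑ i, Q a i * v i j : ℤ) : ℂ) = 0 := by rw [this]; norm_num
          push_cast at h2
          exact h2
        rw [hc, zero_mul]
end

section
/- Let m be a positive integer, ℓ : Fin m → ℤ an integer vector, and Φ : (Fin m → ℂ) → ℂ an entire function. For i ∈ Fin m let 𝒟_i be the operator sending a function g to A ↦ (A i)·(∂_i g)(A). Then for every A with A i ≠ 0 for all i, the following factorization identity holds: (∏_{i : ℓ i > 0} ∂_i^{ℓ i})Φ(A) − (∏_{i : ℓ i < 0} ∂_i^{−ℓ i})Φ(A) = (∏_{i : ℓ i > 0} (A i)^{−ℓ i}) · [ (∏_{i : ℓ i > 0} ∏_{k=0}^{ℓ i − 1}(𝒟_i − k))Φ(A) − (∏_{j ∈ Fin m} (A j)^{ℓ j}) · (∏_{i : ℓ i < 0} ∏_{k=0}^{−ℓ i − 1}(𝒟_i − k))Φ(A) ], where the products of operators denote compositions taken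 in increasing order of i and, for fixed i, increasing order of k (these operators pairwise commute on entire functions). -/
/-- Composition of a list of operators, in order: `[T₀, T₁, …] ↦ T₀ ∘ T₁ ∘ ⋯`. -/
def compList {α : Type*} (ops : List (α → α)) : α → α :=
  ops.foldr (· ∘ ·) id

/-- The partial derivative operator in the `i`-th coordinate:
`(pdiff i g)(A) = ∂_i g (A) = (fderiv ℂ g A)(e_i)`. -/
noncomputable def pdiff {m : ℕ} (i : Fin m) (g : (Fin m → ℂ) → ℂ) : (Fin m → ℂ) → ℂ :=
  fun A => fderiv ℂ g A (Pi.single i 1)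

/-- The shifted Euler operator `(𝒟_i − k)(g)(A) = (A i)·(∂_i g)(A) − k·g(A)`. -/
noncomputable def eulerOp {m : ℕ} (i : Fin m) (k : ℕ) (g : (Fin m → ℂ) → ℂ) :
    (Fin m → ℂ) → ℂ :=
  fun A => A i * fderiv ℂ g A (Pi.single i 1) - (k : ℂ) * g A

namespace GKZaux

variable {m : ℕ}

abbrev Ent (f : (Fin m → ℂ) → ℂ) : Prop := AnalyticOnNhd ℂ f Set.univ

lemma compList_cons {α : Type*} (T : α → α) (l : List (α → α)) (x : α) :
    compList (T :: l) x = T (compList l x) := rfl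

lemma compList_append {α : Type*} (l₁ l₂ : List (α → α)) (x : α) :
    compList (l₁ ++ l₂) x = compList l₁ (compList l₂ x) := by
  induction l₁ with
  | nil => rfl
  | cons a t ih => simp [compList_cons, ih]

lemma Ent.diff {f : (Fin m → ℂ) → ℂ} (hf : Ent f) : Differentiable ℂ f :=
  fun x => (hf x trivial).differentiableAt

lemma Ent.pd {f : (Fin m → ℂ) → ℂ} (hf : Ent f) (i : Fin m) : Ent (pdiff i f) := by
  have h : pdiff i f = (ContinuousLinearMap.apply ℂ ℂ (Pi.single i 1)) ∘ fderiv ℂ f := rfl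
  rw [h]
  exact fun x _ =>
    ((ContinuousLinearMap.apply ℂ ℂ (Pi.single i 1)).analyticAt _).comp (hf.fderiv x trivial)

lemma Ent.iter {f : (Fin m → ℂ) → ℂ} (hf : Ent f) (i : Fin m) (n : ℕ) :
    Ent ((pdiff i)^[n] f) := by
  induction n with
  | zero => exact hf
  | succ n ih => rw [Function.iterate_succ']; exact ih.pd i

lemma ent_coord (i : Fin m) : Ent (fun A : Fin m → ℂ => A i) :=
  (ContinuousLinearMap.proj i : (Fin m → ℂ) →L[ℂ] ℂ).analyticOnNhd _

lemma Ent.euler {f : (Fin m → ℂ) → ℂ} (hf : Ent f) (i : Fin m) (k : ℕ) :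
    Ent (eulerOp i k f) := by
  intro x hx
  exact (((ent_coord i x hx).mul (hf.pd i x hx)).sub (analyticAt_const.mul (hf x hx)))

lemma Ent.eulerList {f : (Fin m → ℂ) → ℂ} (hf : Ent f) (i : Fin m) (l : List ℕ) :
    Ent (compList (l.map (eulerOp i)) f) := by
  induction l with
  | nil => exact hf
  | cons k t ih => exact ih.euler i k

lemma hasFDerivAt_coord (i : Fin m) (A : Fin m → ℂ) :
    HasFDerivAt (fun A : Fin m → ℂ => A i)
      (ContinuousLinearMap.proj i : (Fin m → ℂ) →L[ℂ] ℂ) A :=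
  (ContinuousLinearMap.proj i : (Fin m → ℂ) →L[ℂ] ℂ).hasFDerivAt

lemma pdiff_add {f g : (Fin m → ℂ) → ℂ} (hf : Differentiable ℂ f) (hg : Differentiable ℂ g)
    (i : Fin m) : pdiff i (fun A => f A + g A) = fun A => pdiff i f A + pdiff i g A := by
  funext A
  simp only [pdiff, fderiv_fun_add (hf A) (hg A), ContinuousLinearMap.add_apply]

lemma pdiff_sub {f g : (Fin m → ℂ) → ℂ} (hf : Differentiable ℂ f) (hg : Differentiable ℂ g)
    (i : Fin m) : pdiff i (fun A => f A - g A) = fun A => pdiff i f A - pdiff i g A := by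
  funext A
  simp only [pdiff, fderiv_fun_sub (hf A) (hg A), ContinuousLinearMap.sub_apply]

lemma pdiff_const_mul {f : (Fin m → ℂ) → ℂ} (hf : Differentiable ℂ f) (c : ℂ)
    (i : Fin m) : pdiff i (fun A => c * f A) = fun A => c * pdiff i f A := by
  funext A
  simp only [pdiff, fderiv_const_mul (hf A) c, ContinuousLinearMap.smul_apply, smul_eq_mul]

lemma pdiff_coord_mul {f : (Fin m → ℂ) → ℂ} (hf : Differentiable ℂ f) (i : Fin m) :
    pdiff i (fun A => A i * f A) = fun A => f A + A i * pdiff i f A := by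
  funext A
  have h1 := hasFDerivAt_coord i A
  have h2 := (hf A).hasFDerivAt
  have h3 := (h1.fun_mul h2).fderiv
  simp only [pdiff, h3, ContinuousLinearMap.add_apply, ContinuousLinearMap.smul_apply,
    smul_eq_mul, ContinuousLinearMap.proj_apply, Pi.single_eq_same]
  ring

lemma pdiff_coordpow_mul {f : (Fin m → ℂ) → ℂ} (hf : Differentiable ℂ f) {i j : Fin m}
    (hij : j ≠ i) (n : ℕ) :
    pdiff i (fun A => (A j) ^ n * f A) = fun A => (A j) ^ n * pdiff i f A := by
  funext A
  have h1 : HasFDerivAt (fun A : Fin m → ℂ => (A j) ^ n)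
      ((↑n * (A j) ^ (n - 1)) • (ContinuousLinearMap.proj j : (Fin m → ℂ) →L[ℂ] ℂ)) A :=
    (hasDerivAt_pow n (A j)).comp_hasFDerivAt A (hasFDerivAt_coord j A)
  have h2 := (hf A).hasFDerivAt
  have h3 := (h1.fun_mul h2).fderiv
  simp only [pdiff, h3, ContinuousLinearMap.add_apply, ContinuousLinearMap.smul_apply,
    smul_eq_mul, ContinuousLinearMap.proj_apply, Pi.single_eq_of_ne hij]
  ring


lemma iter_succ' (f : (Fin m → ℂ) → ℂ) (i : Fin m) (n : ℕ) :
    (pdiff i)^[n + 1] f = pdiff i ((pdiff i)^[n] f) := by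
  rw [Function.iterate_succ']; rfl

lemma iter_const_mul {f : (Fin m → ℂ) → ℂ} (hf : Ent f) (c : ℂ) (i : Fin m) (n : ℕ) :
    (pdiff i)^[n] (fun A => c * f A) = fun A => c * (pdiff i)^[n] f A := by
  induction n with
  | zero => rfl
  | succ n ih =>
      rw [iter_succ', ih, pdiff_const_mul (hf.iter i n).diff c i]
      funext A
      rw [iter_succ']

lemma iter_sub {f g : (Fin m → ℂ) → ℂ} (hf : Ent f) (hg : Ent g) (i : Fin m) (n : ℕ) :
    (pdiff i)^[n] (fun A => f A - g A) = fun A => (pdiff i)^[n] f A - (pdiff i)^[n] g A := by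
  induction n with
  | zero => rfl
  | succ n ih =>
      rw [iter_succ', ih, pdiff_sub (hf.iter i n).diff (hg.iter i n).diff i]
      funext A
      rw [iter_succ' f, iter_succ' g]

lemma iter_coord_mul {g : (Fin m → ℂ) → ℂ} (hg : Ent g) (i : Fin m) (n : ℕ) :
    (pdiff i)^[n] (fun A => A i * pdiff i g A)
      = fun A => (n : ℂ) * (pdiff i)^[n] g A + A i * (pdiff i)^[n + 1] g A := by
  induction n with
  | zero =>
      simp only [Function.iterate_zero, id_eq, Nat.cast_zero, zero_mul, zero_add]
      rw [Function.iterate_one]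
  | succ n ih =>
      rw [iter_succ', ih,
        pdiff_add (Differentiable.const_mul (hg.iter i n).diff _)
          ((((ent_coord i).diff)).fun_mul ((hg.iter i (n+1)).diff)) i,
        pdiff_const_mul (hg.iter i n).diff _ i, pdiff_coord_mul (hg.iter i (n+1)).diff i]
      funext A
      simp only [← iter_succ']
      push_cast
      ring

/-- Key one-variable identity:  `∏_{k<n} (𝒟_i - k) g = x_i^n ∂_i^n g`. -/
lemma euler_block {g : (Fin m → ℂ) → ℂ} (hg : Ent g) (i : Fin m) (n : ℕ) :
    compList ((List.range n).map (eulerOp i)) g = fun A => (A i) ^ n * (pdiff i)^[n] g A := by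
  induction n generalizing g with
  | zero => simp [compList]
  | succ n ih =>
      rw [List.range_succ, List.map_append, compList_append,
        show compList (List.map (eulerOp i) [n]) g = eulerOp i n g from rfl,
        ih (hg.euler i n)]
      have h1 : Ent (fun A => A i * pdiff i g A) :=
        fun x hx => (ent_coord i x hx).mul (hg.pd i x hx)
      have h2 : Ent (fun A => (n : ℂ) * g A) :=
        fun x hx => analyticAt_const.mul (hg x hx)
      have he : (pdiff i)^[n] (eulerOp i n g)
          = fun A => (pdiff i)^[n] (fun A => A i * pdiff i g A) A
              - (pdiff i)^[n] (fun A => (n : ℂ) * g A) A := by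
        rw [← iter_sub h1 h2 i n]; rfl
      rw [he, iter_coord_mul hg i n, iter_const_mul hg (n : ℂ) i n]
      funext A
      ring

/-- monomial over a list of coordinates -/
def mono (A : Fin m → ℂ) (n : Fin m → ℕ) (t : List (Fin m)) : ℂ :=
  (t.map (fun j => (A j) ^ (n j))).prod

lemma diff_mono_mul {f : (Fin m → ℂ) → ℂ} (hf : Differentiable ℂ f) (n : Fin m → ℕ)
    (t : List (Fin m)) : Differentiable ℂ (fun A => mono A n t * f A) := by
  induction t generalizing f with
  | nil => simpa [mono] using hf
  | cons j s ih =>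
      have := (((ContinuousLinearMap.proj j : (Fin m → ℂ) →L[ℂ] ℂ).differentiable).fun_pow
        (n j)).fun_mul (ih hf)
      simpa [mono, mul_assoc] using this

lemma ent_mono_mul {f : (Fin m → ℂ) → ℂ} (hf : Ent f) (n : Fin m → ℕ)
    (t : List (Fin m)) : Ent (fun A => mono A n t * f A) := by
  induction t generalizing f with
  | nil => simpa [mono] using hf
  | cons j s ih =>
      intro x hx
      have : AnalyticAt ℂ (fun A : Fin m → ℂ => (A j) ^ (n j) * (mono A n s * f A)) x :=
        ((((ent_coord j) x hx).pow (n j)).mul (ih hf x hx))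
      simpa [mono, mul_assoc] using this

lemma pdiff_mono_mul {f : (Fin m → ℂ) → ℂ} (hf : Differentiable ℂ f) (n : Fin m → ℕ)
    {i : Fin m} {t : List (Fin m)} (hit : i ∉ t) :
    pdiff i (fun A => mono A n t * f A) = fun A => mono A n t * pdiff i f A := by
  induction t generalizing f with
  | nil => simp [mono]
  | cons j s ih =>
      have hji : j ≠ i := fun h => hit (h ▸ List.mem_cons_self)
      have his : i ∉ s := fun h => hit (List.mem_cons_of_mem j h)
      have h1 : (fun A => mono A n (j :: s) * f A)
          = fun A => (A j) ^ (n j) * (mono A n s * f A) := by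
        funext A; simp [mono, mul_assoc]
      rw [h1, pdiff_coordpow_mul (diff_mono_mul hf n s) hji (n j), ih hf his]
      funext A; simp [mono, mul_assoc]

lemma iter_mono_mul {f : (Fin m → ℂ) → ℂ} (hf : Ent f) (n : Fin m → ℕ)
    {i : Fin m} {t : List (Fin m)} (hit : i ∉ t) (k : ℕ) :
    (pdiff i)^[k] (fun A => mono A n t * f A) = fun A => mono A n t * (pdiff i)^[k] f A := by
  induction k with
  | zero => rfl
  | succ k ih =>
      rw [iter_succ', ih, pdiff_mono_mul (hf.iter i k).diff n hit]
      funext A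
      rw [iter_succ']

lemma Ent.diffBlocks {f : (Fin m → ℂ) → ℂ} (hf : Ent f) (n : Fin m → ℕ) (L : List (Fin m)) :
    Ent (compList (L.map (fun i => (pdiff i)^[n i])) f) := by
  induction L with
  | nil => exact hf
  | cons j t ih => exact ih.iter j (n j)

lemma Ent.blocks {f : (Fin m → ℂ) → ℂ} (hf : Ent f) (n : Fin m → ℕ) (L : List (Fin m)) :
    Ent (compList (L.map (fun i => compList ((List.range (n i)).map (eulerOp i)))) f) := by
  induction L with
  | nil => exact hf
  | cons j t ih => exact ih.eulerList j _

/-- Multi-variable factorization. -/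
lemma multi_block {Φ : (Fin m → ℂ) → ℂ} (hΦ : Ent Φ) (n : Fin m → ℕ)
    {L : List (Fin m)} (hL : L.Nodup) :
    compList (L.map (fun i => compList ((List.range (n i)).map (eulerOp i)))) Φ
      = fun A => mono A n L * compList (L.map (fun i => (pdiff i)^[n i])) Φ A := by
  induction L with
  | nil => funext A; simp [compList, mono]
  | cons j t ih =>
      have hjt : j ∉ t := (List.nodup_cons.mp hL).1
      have htn : t.Nodup := (List.nodup_cons.mp hL).2
      have hG : Ent (compList (t.map (fun i => compList ((List.range (n i)).map (eulerOp i)))) Φ) :=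
        hΦ.blocks n t
      have hD : Ent (compList (t.map (fun i => (pdiff i)^[n i])) Φ) := hΦ.diffBlocks n t
      rw [List.map_cons, compList_cons, euler_block hG j (n j), ih htn,
        iter_mono_mul hD n hjt (n j)]
      funext A
      simp only [mono, List.map_cons, List.prod_cons, compList_cons]
      ring

lemma list_filter_prod (p : Fin m → Prop) [DecidablePred p] (f : Fin m → ℂ) :
    (((List.finRange m).filter (fun i => decide (p i))).map f).prod
      = ∏ i ∈ Finset.univ.filter p, f i := by
  rw [Finset.prod_filter, Fin.prod_univ_def]
  have : ∀ l : List (Fin m),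
      ((l.filter (fun i => decide (p i))).map f).prod
        = (l.map fun i => if p i then f i else 1).prod := by
    intro l
    induction l with
    | nil => rfl
    | cons a t ih => by_cases h : p a <;> simp [List.filter_cons, h, ih]
  exact this _

end GKZaux

open GKZaux

/-- The GKZ box operator
`∏_{i : ℓ i > 0} ∂_i^{ℓ i} − ∏_{i : ℓ i < 0} ∂_i^{−ℓ i}` applied to an entire function
`Φ` factors, at any point `A` of the torus `{A | ∀ i, A i ≠ 0}`, as the monomial
`∏_{i : ℓ i > 0} (A i)^{−ℓ i}` times
`(∏_{i : ℓ i > 0} ∏_{k=0}^{ℓ i − 1}(𝒟_i − k))Φ(A)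
 − (∏_j (A j)^{ℓ j}) · (∏_{i : ℓ i < 0} ∏_{k=0}^{−ℓ i − 1}(𝒟_i − k))Φ(A)`;
operator products are compositions in increasing order of `i` and, for fixed `i`,
increasing order of `k`. -/
theorem stmt5 (m : ℕ) (hm : 0 < m) (ℓ : Fin m → ℤ) (Φ : (Fin m → ℂ) → ℂ)
    (hΦ : AnalyticOnNhd ℂ Φ Set.univ) (A : Fin m → ℂ) (hA : ∀ i, A i ≠ 0) :
    compList (((List.finRange m).filter (fun i => decide (0 < ℓ i))).map
        (fun i => (pdiff i)^[(ℓ i).toNat])) Φ A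
      - compList (((List.finRange m).filter (fun i => decide (ℓ i < 0))).map
          (fun i => (pdiff i)^[(-ℓ i).toNat])) Φ A
    = (∏ i ∈ Finset.univ.filter (fun i => 0 < ℓ i), (A i) ^ (-ℓ i)) *
        (compList (((List.finRange m).filter (fun i => decide (0 < ℓ i))).map
            (fun i => compList ((List.range (ℓ i).toNat).map (eulerOp i)))) Φ A
          - (∏ j, (A j) ^ (ℓ j)) *
            compList (((List.finRange m).filter (fun i => decide (ℓ i < 0))).map
                (fun i => compList ((List.range (-ℓ i).toNat).map (eulerOp i)))) Φ A) := by
  have hPn : ((List.finRange m).filter (fun i => decide (0 < ℓ i))).Nodup :=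
    (List.nodup_finRange m).filter _
  have hNn : ((List.finRange m).filter (fun i => decide (ℓ i < 0))).Nodup :=
    (List.nodup_finRange m).filter _
  rw [multi_block hΦ (fun i => (ℓ i).toNat) hPn, multi_block hΦ (fun i => (-ℓ i).toNat) hNn]
  set P := (List.finRange m).filter (fun i => decide (0 < ℓ i)) with hP
  set N := (List.finRange m).filter (fun i => decide (ℓ i < 0)) with hN
  set DP := compList (P.map (fun i => (pdiff i)^[(ℓ i).toNat])) Φ A with hDP
  set DN := compList (N.map (fun i => (pdiff i)^[(-ℓ i).toNat])) Φ A with hDN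
  set BP := ∏ i ∈ Finset.univ.filter (fun i => 0 < ℓ i), (A i) ^ (ℓ i) with hBP
  set BN := ∏ i ∈ Finset.univ.filter (fun i => ℓ i < 0), (A i) ^ (ℓ i) with hBN
  have hBP0 : BP ≠ 0 := Finset.prod_ne_zero_iff.mpr fun i _ => zpow_ne_zero _ (hA i)
  have hBN0 : BN ≠ 0 := Finset.prod_ne_zero_iff.mpr fun i _ => zpow_ne_zero _ (hA i)
  have hmP : mono A (fun i => (ℓ i).toNat) P = BP := by
    rw [hBP, mono, hP, list_filter_prod (fun i => 0 < ℓ i)]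
    refine Finset.prod_congr rfl fun i hi => ?_
    rw [Finset.mem_filter] at hi
    rw [← zpow_natCast, Int.toNat_of_nonneg (le_of_lt hi.2)]
  have hmN : mono A (fun i => (-ℓ i).toNat) N = BN⁻¹ := by
    rw [hBN, mono, hN, list_filter_prod (fun i => ℓ i < 0), ← Finset.prod_inv_distrib]
    refine Finset.prod_congr rfl fun i hi => ?_
    rw [Finset.mem_filter] at hi
    rw [← zpow_natCast, Int.toNat_of_nonneg (by omega : (0:ℤ) ≤ -ℓ i), zpow_neg]
  have hc : (∏ i ∈ Finset.univ.filter (fun i => 0 < ℓ i), (A i) ^ (-ℓ i)) = BP⁻¹ := by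
    rw [hBP, ← Finset.prod_inv_distrib]
    exact Finset.prod_congr rfl fun i _ => zpow_neg (A i) (ℓ i)
  have ht : (∏ j, (A j) ^ (ℓ j)) = BP * BN := by
    rw [hBP, hBN, ← Finset.prod_filter_mul_prod_filter_not Finset.univ (fun i => 0 < ℓ i)]
    congr 1
    rw [Finset.prod_filter, Finset.prod_filter]
    refine Finset.prod_congr rfl fun i _ => ?_
    rcases lt_trichotomy (ℓ i) 0 with h | h | h
    · simp [h, not_lt.mpr h.le]
    · simp [h]
    · simp [h, not_lt.mpr h.le]
  beta_reduce
  rw [hmP, hmN, hc, ht]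
  field_simp
  ring
end

section
/- Let l, m be positive integers and Q : Fin l → Fin m → ℤ an integer matrix. Let U = {A : Fin m → ℂ | A i ≠ 0 for all i} and define the monomial map y : U → (Fin l → ℂ) by y(A) a = ∏_{i} (A i)^{Q a i} (integer powers of nonzero complex numbers). Let d : Fin l → ℤ and set ℓ i = Σ_{a} (Q a i)·(d a) for i ∈ Fin m. Let W be an open subset of {y : Fin l → ℂ | y a ≠ 0 for all a} and let Ψ be complex-analytic on W. For i ∈ Fin m, let 𝒟_i be the operator on functions on W sending g to y ↦ Σ_{a} (Q a i)·(y a)·(∂_a g)(y). Suppose Ψ satisfies the equation 𝒫_d Ψ = 0 on W, i.e. for all y ∈ W: (∏_{i : ℓ i > 0} ∏_{k=0}^{ℓ i − 1}(𝒟_i − k))Ψ(y) = (∏_{a} (y a)^{d a}) · (∏_{i : ℓ i < 0} ∏_{k=0}^{−ℓ i − 1}(𝒟_i − k))Ψ(y), where operator products denote compositions in increasing order of i and k. Then Φ = Ψ ∘ y satisfies the GKZ box equation: for every A ∈ U with y(A) ∈ W, (∏_{i : ℓ i > 0} ∂_i^{ℓ i})Φ(A) = (∏_{i : ℓ i < 0}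 ∂_i^{−ℓ i})Φ(A). -/
/-- The shifted operator `(𝒟_i − k)` in the `y`-variables, where
`𝒟_i(g)(y) = Σ_a (Q a i) · y_a · (∂_a g)(y)`. -/
noncomputable def eulerOpY {l m : ℕ} (Q : Fin l → Fin m → ℤ) (i : Fin m) (k : ℕ)
    (g : (Fin l → ℂ) → ℂ) : (Fin l → ℂ) → ℂ :=
  fun y => (∑ a, (Q a i : ℂ) * y a * fderiv ℂ g y (Pi.single a 1)) - (k : ℂ) * g y

open Filter Topology Finset

namespace GKZ

lemma compList_cons {α : Type*} (f : α → α) (L : List (α → α)) :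
    compList (f :: L) = f ∘ compList L := rfl

lemma compList_append {α : Type*} (L1 L2 : List (α → α)) :
    compList (L1 ++ L2) = compList L1 ∘ compList L2 := by
  induction L1 with
  | nil => rfl
  | cons f L ih =>
    show f ∘ compList (L ++ L2) = (f ∘ compList L) ∘ compList L2
    rw [ih]; rfl

lemma pdiff_congr {m : ℕ} {i : Fin m} {f1 f2 : (Fin m → ℂ) → ℂ} {A : Fin m → ℂ}
    (h : f1 =ᶠ[𝓝 A] f2) : pdiff i f1 =ᶠ[𝓝 A] pdiff i f2 := by
  filter_upwards [h.eventually_nhds] with B hB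
  have h2 : fderiv ℂ f1 B = fderiv ℂ f2 B := Filter.EventuallyEq.fderiv_eq hB
  simp only [pdiff, h2]

lemma pdiff_iter_congr {m : ℕ} {i : Fin m} (n : ℕ) {f1 f2 : (Fin m → ℂ) → ℂ} {A : Fin m → ℂ}
    (h : f1 =ᶠ[𝓝 A] f2) : (pdiff i)^[n] f1 A = (pdiff i)^[n] f2 A := by
  have H : ∀ n : ℕ, (pdiff i)^[n] f1 =ᶠ[𝓝 A] (pdiff i)^[n] f2 := by
    intro n
    induction n with
    | zero => exact h
    | succ n ih =>
      rw [Function.iterate_succ']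
      exact pdiff_congr ih
  exact (H n).eq_of_nhds

noncomputable def Dop {l m : ℕ} (Q : Fin l → Fin m → ℤ) (i : Fin m) (g : (Fin l → ℂ) → ℂ) :
    (Fin l → ℂ) → ℂ :=
  fun z => ∑ a, (Q a i : ℂ) * z a * fderiv ℂ g z (Pi.single a 1)

lemma Dop_analytic {l m : ℕ} (Q : Fin l → Fin m → ℤ) {W : Set (Fin l → ℂ)} (i : Fin m)
    {g : (Fin l → ℂ) → ℂ} (hg : AnalyticOnNhd ℂ g W) : AnalyticOnNhd ℂ (Dop Q i g) W := by
  apply Finset.analyticOnNhd_fun_sum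
  intro a _
  apply AnalyticOnNhd.mul
  · exact analyticOnNhd_const.mul
      ((ContinuousLinearMap.proj a : (Fin l → ℂ) →L[ℂ] ℂ).analyticOnNhd W)
  · exact (ContinuousLinearMap.apply ℂ ℂ (Pi.single a 1)).comp_analyticOnNhd hg.fderiv

lemma euler_analytic {l m : ℕ} (Q : Fin l → Fin m → ℤ) {W : Set (Fin l → ℂ)} (i : Fin m) (k : ℕ)
    {g : (Fin l → ℂ) → ℂ} (hg : AnalyticOnNhd ℂ g W) :
    AnalyticOnNhd ℂ (eulerOpY Q i k g) W := by
  have e : eulerOpY Q i k g = fun z => Dop Q i g z - (k : ℂ) * g z := rfl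
  rw [e]
  exact (Dop_analytic Q i hg).sub (analyticOnNhd_const.mul hg)

lemma fderiv_euler {l m : ℕ} (Q : Fin l → Fin m → ℤ) {W : Set (Fin l → ℂ)} (hW : IsOpen W)
    (i : Fin m) (k : ℕ) {g : (Fin l → ℂ) → ℂ} (hg : AnalyticOnNhd ℂ g W)
    {z : Fin l → ℂ} (hz : z ∈ W) (v : Fin l → ℂ) :
    fderiv ℂ (eulerOpY Q i k g) z v
      = fderiv ℂ (Dop Q i g) z v - (k : ℂ) * fderiv ℂ g z v := by
  have h1 : DifferentiableAt ℂ (Dop Q i g) z := ((Dop_analytic Q i hg) z hz).differentiableAt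
  have h2 : DifferentiableAt ℂ g z := (hg z hz).differentiableAt
  have e : eulerOpY Q i k g = fun z => Dop Q i g z - (k : ℂ) * g z := rfl
  rw [e, fderiv_fun_sub h1 (h2.const_mul _), fderiv_const_mul h2]
  simp

lemma Dop_euler {l m : ℕ} (Q : Fin l → Fin m → ℤ) {W : Set (Fin l → ℂ)} (hW : IsOpen W)
    (i : Fin m) (k : ℕ) {g : (Fin l → ℂ) → ℂ} (hg : AnalyticOnNhd ℂ g W)
    {z : Fin l → ℂ} (hz : z ∈ W) :
    Dop Q i (eulerOpY Q i k g) z = Dop Q i (Dop Q i g) z - (k : ℂ) * Dop Q i g z := by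
  have e : ∀ h : (Fin l → ℂ) → ℂ, Dop Q i h z = ∑ a, (Q a i : ℂ) * z a * fderiv ℂ h z (Pi.single a 1) :=
    fun _ => rfl
  rw [e (eulerOpY Q i k g), e (Dop Q i g), e g, Finset.mul_sum, ← Finset.sum_sub_distrib]
  apply Finset.sum_congr rfl
  intro a _
  rw [fderiv_euler Q hW i k hg hz]
  ring

lemma euler_comm {l m : ℕ} (Q : Fin l → Fin m → ℤ) {W : Set (Fin l → ℂ)} (hW : IsOpen W)
    (i : Fin m) (j k : ℕ) {g : (Fin l → ℂ) → ℂ} (hg : AnalyticOnNhd ℂ g W)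
    {z : Fin l → ℂ} (hz : z ∈ W) :
    eulerOpY Q i j (eulerOpY Q i k g) z = eulerOpY Q i k (eulerOpY Q i j g) z := by
  have e1 : eulerOpY Q i k g z = Dop Q i g z - (k : ℂ) * g z := rfl
  have e2 : eulerOpY Q i j g z = Dop Q i g z - (j : ℂ) * g z := rfl
  show Dop Q i (eulerOpY Q i k g) z - (j : ℂ) * eulerOpY Q i k g z
      = Dop Q i (eulerOpY Q i j g) z - (k : ℂ) * eulerOpY Q i j g z
  rw [Dop_euler Q hW i k hg hz, Dop_euler Q hW i j hg hz, e1, e2]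
  ring


noncomputable def eulC {l m : ℕ} (Q : Fin l → Fin m → ℤ) (i : Fin m) (n : ℕ) :
    ((Fin l → ℂ) → ℂ) → ((Fin l → ℂ) → ℂ) :=
  compList ((List.range n).map (eulerOpY Q i))

lemma eulC_succ {l m : ℕ} (Q : Fin l → Fin m → ℤ) (i : Fin m) (n : ℕ) (g : (Fin l → ℂ) → ℂ) :
    eulC Q i (n+1) g = eulC Q i n (eulerOpY Q i n g) := by
  unfold eulC
  rw [List.range_succ, List.map_append, compList_append]
  rfl

lemma eulC_analytic {l m : ℕ} (Q : Fin l → Fin m → ℤ) {W : Set (Fin l → ℂ)} (i : Fin m) (n : ℕ) :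
    ∀ g : (Fin l → ℂ) → ℂ, AnalyticOnNhd ℂ g W → AnalyticOnNhd ℂ (eulC Q i n g) W := by
  induction n with
  | zero => exact fun g hg => hg
  | succ n ih =>
    intro g hg
    rw [eulC_succ]
    exact ih _ (euler_analytic Q i n hg)

lemma euler_congrOn {l m : ℕ} (Q : Fin l → Fin m → ℤ) {W : Set (Fin l → ℂ)} (hW : IsOpen W)
    (i : Fin m) (k : ℕ) {h1 h2 : (Fin l → ℂ) → ℂ} (h : Set.EqOn h1 h2 W) :
    Set.EqOn (eulerOpY Q i k h1) (eulerOpY Q i k h2) W := by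
  intro z hz
  have hev : h1 =ᶠ[𝓝 z] h2 := h.eventuallyEq_of_mem (hW.mem_nhds hz)
  have h3 : fderiv ℂ h1 z = fderiv ℂ h2 z := hev.fderiv_eq
  simp only [eulerOpY, h3, h hz]

lemma eulC_congrOn {l m : ℕ} (Q : Fin l → Fin m → ℤ) {W : Set (Fin l → ℂ)} (hW : IsOpen W)
    (i : Fin m) (n : ℕ) :
    ∀ h1 h2 : (Fin l → ℂ) → ℂ, Set.EqOn h1 h2 W → Set.EqOn (eulC Q i n h1) (eulC Q i n h2) W := by
  induction n with
  | zero => exact fun h1 h2 h => h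
  | succ n ih =>
    intro h1 h2 h
    rw [eulC_succ, eulC_succ]
    exact ih _ _ (euler_congrOn Q hW i n h)

lemma euler_eulC_comm {l m : ℕ} (Q : Fin l → Fin m → ℤ) {W : Set (Fin l → ℂ)} (hW : IsOpen W)
    (i : Fin m) (n : ℕ) :
    ∀ g : (Fin l → ℂ) → ℂ, AnalyticOnNhd ℂ g W → ∀ j : ℕ,
      Set.EqOn (eulerOpY Q i j (eulC Q i n g)) (eulC Q i n (eulerOpY Q i j g)) W := by
  induction n with
  | zero => intro g hg j z hz; rfl
  | succ n ih =>
    intro g hg j z hz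
    calc eulerOpY Q i j (eulC Q i (n+1) g) z
        = eulerOpY Q i j (eulC Q i n (eulerOpY Q i n g)) z := by rw [eulC_succ]
      _ = eulC Q i n (eulerOpY Q i j (eulerOpY Q i n g)) z :=
          ih (eulerOpY Q i n g) (euler_analytic Q i n hg) j hz
      _ = eulC Q i n (eulerOpY Q i n (eulerOpY Q i j g)) z :=
          eulC_congrOn Q hW i n _ _ (fun w hw => euler_comm Q hW i j n hg hw) hz
      _ = eulC Q i (n+1) (eulerOpY Q i j g) z := by rw [eulC_succ]

lemma eulC_succ_eqOn {l m : ℕ} (Q : Fin l → Fin m → ℤ) {W : Set (Fin l → ℂ)} (hW : IsOpen W)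
    (i : Fin m) (n : ℕ) {g : (Fin l → ℂ) → ℂ} (hg : AnalyticOnNhd ℂ g W) :
    Set.EqOn (eulC Q i (n+1) g) (eulerOpY Q i n (eulC Q i n g)) W := by
  intro z hz
  rw [eulC_succ]
  exact (euler_eulC_comm Q hW i n g hg n hz).symm

noncomputable def yDeriv {l m : ℕ} (Q : Fin l → Fin m → ℤ) (A : Fin m → ℂ) (a : Fin l) :
    (Fin m → ℂ) →L[ℂ] ℂ :=
  ∑ i, ((∏ j ∈ Finset.univ.erase i, (A j) ^ (Q a j)) *
      ((Q a i : ℂ) * (A i) ^ (Q a i - 1))) • ContinuousLinearMap.proj i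

lemma y_hasFDerivAt {l m : ℕ} (Q : Fin l → Fin m → ℤ) (y : (Fin m → ℂ) → (Fin l → ℂ))
    (hy : ∀ (A : Fin m → ℂ) (a : Fin l), y A a = ∏ i, (A i) ^ (Q a i))
    (a : Fin l) (A : Fin m → ℂ) (hA : ∀ j, A j ≠ 0) :
    HasFDerivAt (fun B => y B a) (yDeriv Q A a) A := by
  have h1 : ∀ i : Fin m, HasFDerivAt (fun B : Fin m → ℂ => (B i) ^ (Q a i))
      (((Q a i : ℂ) * (A i) ^ (Q a i - 1)) •
        (ContinuousLinearMap.proj i : (Fin m → ℂ) →L[ℂ] ℂ)) A := by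
    intro i
    have hp : HasFDerivAt (fun B : Fin m → ℂ => B i)
        (ContinuousLinearMap.proj i : (Fin m → ℂ) →L[ℂ] ℂ) A :=
      (ContinuousLinearMap.proj i : (Fin m → ℂ) →L[ℂ] ℂ).hasFDerivAt
    exact (hasDerivAt_zpow (Q a i) (A i) (Or.inl (hA i))).comp_hasFDerivAt A hp
  have h2 := HasFDerivAt.finset_prod (u := Finset.univ)
    (g := fun i (B : Fin m → ℂ) => (B i) ^ (Q a i))
    (g' := fun i => ((Q a i : ℂ) * (A i) ^ (Q a i - 1)) •
      (ContinuousLinearMap.proj i : (Fin m → ℂ) →L[ℂ] ℂ))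
    (fun i _ => h1 i)
  have e1 : (fun B => y B a) = fun B : Fin m → ℂ => ∏ i, (B i) ^ (Q a i) :=
    funext fun B => hy B a
  have e2 : yDeriv Q A a = ∑ i, (∏ j ∈ Finset.univ.erase i, (A j) ^ (Q a j)) •
      (((Q a i : ℂ) * (A i) ^ (Q a i - 1)) •
        (ContinuousLinearMap.proj i : (Fin m → ℂ) →L[ℂ] ℂ)) := by
    simp [yDeriv, smul_smul]
  rw [e1, e2]
  exact h2

lemma yDeriv_apply {l m : ℕ} (Q : Fin l → Fin m → ℤ) (A : Fin m → ℂ) (hA : ∀ j, A j ≠ 0)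
    (a : Fin l) (i0 : Fin m) :
    yDeriv Q A a (Pi.single i0 1) = (Q a i0 : ℂ) * (∏ j, (A j) ^ (Q a j)) / A i0 := by
  simp only [yDeriv, ContinuousLinearMap.sum_apply, ContinuousLinearMap.smul_apply,
    ContinuousLinearMap.proj_apply, smul_eq_mul]
  rw [Finset.sum_eq_single i0]
  · have hp : (∏ j, (A j) ^ (Q a j)) = (A i0) ^ (Q a i0) * ∏ j ∈ Finset.univ.erase i0, (A j) ^ (Q a j) :=
      (Finset.mul_prod_erase Finset.univ _ (Finset.mem_univ i0)).symm
    rw [Pi.single_eq_same, hp, zpow_sub_one₀ (hA i0)]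
    field_simp
  · intro b _ hb
    rw [Pi.single_eq_of_ne hb]
    ring
  · intro h
    exact absurd (Finset.mem_univ i0) h

lemma clm_pi_eval {l : ℕ} (T : (Fin l → ℂ) →L[ℂ] ℂ) (v : Fin l → ℂ) :
    T v = ∑ a, v a * T (Pi.single a 1) := by
  conv_lhs => rw [← Finset.univ_sum_single v]
  rw [map_sum]
  apply Finset.sum_congr rfl
  intro a _
  have e : Pi.single a (v a) = v a • (Pi.single a 1 : Fin l → ℂ) := by
    funext b
    by_cases hb : b = a
    · subst hb; simp
    · simp [Pi.single_eq_of_ne hb]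
  rw [e, map_smul]
  rfl

lemma comp_hasFDerivAt {l m : ℕ} (Q : Fin l → Fin m → ℤ) (y : (Fin m → ℂ) → (Fin l → ℂ))
    (hy : ∀ (A : Fin m → ℂ) (a : Fin l), y A a = ∏ i, (A i) ^ (Q a i))
    (h : (Fin l → ℂ) → ℂ) (A : Fin m → ℂ) (hA : ∀ j, A j ≠ 0)
    (hdiff : DifferentiableAt ℂ h (y A)) :
    HasFDerivAt (fun B => h (y B))
      ((fderiv ℂ h (y A)).comp (ContinuousLinearMap.pi (yDeriv Q A))) A := by
  have hY : HasFDerivAt y (ContinuousLinearMap.pi (yDeriv Q A)) A :=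
    hasFDerivAt_pi.2 (fun a => y_hasFDerivAt Q y hy a A hA)
  exact hdiff.hasFDerivAt.comp A hY

lemma comp_fderiv_apply {l m : ℕ} (Q : Fin l → Fin m → ℤ) (y : (Fin m → ℂ) → (Fin l → ℂ))
    (hy : ∀ (A : Fin m → ℂ) (a : Fin l), y A a = ∏ i, (A i) ^ (Q a i))
    (h : (Fin l → ℂ) → ℂ) (A : Fin m → ℂ) (hA : ∀ j, A j ≠ 0) (i0 : Fin m) :
    ((fderiv ℂ h (y A)).comp (ContinuousLinearMap.pi (yDeriv Q A))) (Pi.single i0 1)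
      = (A i0)⁻¹ * Dop Q i0 h (y A) := by
  rw [ContinuousLinearMap.comp_apply]
  have hv : (ContinuousLinearMap.pi (yDeriv Q A)) (Pi.single i0 1)
      = fun a => (Q a i0 : ℂ) * y A a / A i0 := by
    funext a
    rw [ContinuousLinearMap.pi_apply, yDeriv_apply Q A hA a i0, hy A a]
  rw [hv, clm_pi_eval]
  have e : Dop Q i0 h (y A) = ∑ a, (Q a i0 : ℂ) * y A a * fderiv ℂ h (y A) (Pi.single a 1) := rfl
  rw [e, Finset.mul_sum]
  apply Finset.sum_congr rfl
  intro a _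
  rw [div_eq_mul_inv]
  ring

lemma qprod_hasFDeriv {m : ℕ} (L' : List (Fin m)) (E : Fin m → ℤ) (A : Fin m → ℂ)
    (hA : ∀ j, A j ≠ 0) (i0 : Fin m) (hi : i0 ∉ L') :
    ∃ D : (Fin m → ℂ) →L[ℂ] ℂ,
      HasFDerivAt (fun B : Fin m → ℂ => (L'.map (fun j => (B j) ^ (E j))).prod) D A ∧
        D (Pi.single i0 1) = 0 := by
  induction L' with
  | nil =>
    refine ⟨0, ?_, rfl⟩
    simpa using hasFDerivAt_const (1 : ℂ) A
  | cons j L'' ih =>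
    have hj : j ≠ i0 := by
      rintro rfl
      exact hi List.mem_cons_self
    obtain ⟨D, hD, hD0⟩ := ih (fun h => hi (List.mem_cons_of_mem _ h))
    have hpow : HasFDerivAt (fun B : Fin m → ℂ => (B j) ^ (E j))
        (((E j : ℂ) * (A j) ^ (E j - 1)) •
          (ContinuousLinearMap.proj j : (Fin m → ℂ) →L[ℂ] ℂ)) A := by
      have hp : HasFDerivAt (fun B : Fin m → ℂ => B j)
          (ContinuousLinearMap.proj j : (Fin m → ℂ) →L[ℂ] ℂ) A :=
        (ContinuousLinearMap.proj j : (Fin m → ℂ) →L[ℂ] ℂ).hasFDerivAt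
      exact (hasDerivAt_zpow (E j) (A j) (Or.inl (hA j))).comp_hasFDerivAt A hp
    have hfun : (fun B : Fin m → ℂ => (((j :: L'').map (fun j' => (B j') ^ (E j'))).prod))
        = fun B : Fin m → ℂ => (B j) ^ (E j) * ((L''.map (fun j' => (B j') ^ (E j'))).prod) := by
      funext B
      simp
    refine ⟨(A j) ^ (E j) • D + ((L''.map (fun j' => (A j') ^ (E j'))).prod) •
        (((E j : ℂ) * (A j) ^ (E j - 1)) •
          (ContinuousLinearMap.proj j : (Fin m → ℂ) →L[ℂ] ℂ)), ?_, ?_⟩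
    · rw [hfun]
      exact hpow.mul hD
    · simp only [ContinuousLinearMap.add_apply, ContinuousLinearMap.smul_apply,
        ContinuousLinearMap.proj_apply, smul_eq_mul, hD0, mul_zero,
        Pi.single_eq_of_ne hj, zero_add]

lemma torus_open {m : ℕ} : IsOpen {B : Fin m → ℂ | ∀ j, B j ≠ 0} := by
  have e : {B : Fin m → ℂ | ∀ j, B j ≠ 0} = ⋂ j, (fun B : Fin m → ℂ => B j) ⁻¹' {(0:ℂ)}ᶜ := by
    ext B
    simp [Set.mem_iInter]
  rw [e]
  exact isOpen_iInter_of_finite fun j => isOpen_compl_singleton.preimage (continuous_apply j)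

lemma S_open {l m : ℕ} (Q : Fin l → Fin m → ℤ) {W : Set (Fin l → ℂ)} (hW : IsOpen W)
    (y : (Fin m → ℂ) → (Fin l → ℂ))
    (hy : ∀ (A : Fin m → ℂ) (a : Fin l), y A a = ∏ i, (A i) ^ (Q a i)) :
    IsOpen {B : Fin m → ℂ | (∀ j, B j ≠ 0) ∧ y B ∈ W} := by
  rw [isOpen_iff_mem_nhds]
  rintro A ⟨hA, hAW⟩
  have hyc : ContinuousAt y A := by
    rw [continuousAt_pi]
    intro a
    exact (y_hasFDerivAt Q y hy a A hA).differentiableAt.continuousAt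
  have h1 : {B : Fin m → ℂ | ∀ j, B j ≠ 0} ∈ 𝓝 A := torus_open.mem_nhds hA
  have h2 : y ⁻¹' W ∈ 𝓝 A := hyc.preimage_mem_nhds (hW.mem_nhds hAW)
  exact Filter.inter_mem h1 h2

lemma iter_pdiff {l m : ℕ} (Q : Fin l → Fin m → ℤ) {W : Set (Fin l → ℂ)} (hW : IsOpen W)
    (y : (Fin m → ℂ) → (Fin l → ℂ))
    (hy : ∀ (A : Fin m → ℂ) (a : Fin l), y A a = ∏ i, (A i) ^ (Q a i))
    (i0 : Fin m) (L' : List (Fin m)) (hi : i0 ∉ L') (E : Fin m → ℤ) (n : ℕ) :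
    ∀ g : (Fin l → ℂ) → ℂ, AnalyticOnNhd ℂ g W → ∀ A : Fin m → ℂ, (∀ j, A j ≠ 0) → y A ∈ W →
      (pdiff i0)^[n] (fun B => ((L'.map (fun j => (B j) ^ (E j))).prod) * g (y B)) A
        = ((L'.map (fun j => (A j) ^ (E j))).prod) *
            ((A i0) ^ (-(n:ℤ)) * eulC Q i0 n g (y A)) := by
  induction n with
  | zero =>
    intro g hg A hA hAW
    simp [eulC, compList]
  | succ n ih =>
    intro g hg A hA hAW
    rw [Function.iterate_succ_apply']
    have hev : (pdiff i0)^[n] (fun B => ((L'.map (fun j => (B j) ^ (E j))).prod) * g (y B))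
        =ᶠ[𝓝 A] (fun B => ((L'.map (fun j => (B j) ^ (E j))).prod) *
          ((B i0) ^ (-(n:ℤ)) * eulC Q i0 n g (y B))) := by
      filter_upwards [(S_open Q hW y hy).mem_nhds
        (show A ∈ {B : Fin m → ℂ | (∀ j, B j ≠ 0) ∧ y B ∈ W} from ⟨hA, hAW⟩)] with B hB
      exact ih g hg B hB.1 hB.2
    rw [(pdiff_congr hev).eq_of_nhds]
    obtain ⟨D, hD, hD0⟩ := qprod_hasFDeriv L' E A hA i0 hi
    have hpow : HasFDerivAt (fun B : Fin m → ℂ => (B i0) ^ (-(n:ℤ)))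
        (((Int.cast (-(n:ℤ)) : ℂ) * (A i0) ^ (-(n:ℤ) - 1)) •
          (ContinuousLinearMap.proj i0 : (Fin m → ℂ) →L[ℂ] ℂ)) A := by
      have hp : HasFDerivAt (fun B : Fin m → ℂ => B i0)
          (ContinuousLinearMap.proj i0 : (Fin m → ℂ) →L[ℂ] ℂ) A :=
        (ContinuousLinearMap.proj i0 : (Fin m → ℂ) →L[ℂ] ℂ).hasFDerivAt
      exact (hasDerivAt_zpow (-(n:ℤ)) (A i0) (Or.inl (hA i0))).comp_hasFDerivAt A hp
    have hgdiff : DifferentiableAt ℂ (eulC Q i0 n g) (y A) :=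
      ((eulC_analytic Q i0 n g hg) (y A) hAW).differentiableAt
    have hcomp := comp_hasFDerivAt Q y hy (eulC Q i0 n g) A hA hgdiff
    have hK := hD.fun_mul (hpow.fun_mul hcomp)
    have hpd : pdiff i0 (fun B => ((L'.map (fun j => (B j) ^ (E j))).prod) *
          ((B i0) ^ (-(n:ℤ)) * eulC Q i0 n g (y B))) A
        = fderiv ℂ (fun B => ((L'.map (fun j => (B j) ^ (E j))).prod) *
          ((B i0) ^ (-(n:ℤ)) * eulC Q i0 n g (y B))) A (Pi.single i0 1) := rfl
    rw [hpd, hK.fderiv]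
    have hval := comp_fderiv_apply Q y hy (eulC Q i0 n g) A hA i0
    simp only [ContinuousLinearMap.add_apply, ContinuousLinearMap.smul_apply, smul_eq_mul,
      hD0, mul_zero, add_zero, hval, ContinuousLinearMap.proj_apply, Pi.single_eq_same,
      mul_one]
    have hsucc : eulC Q i0 (n+1) g (y A) = eulerOpY Q i0 n (eulC Q i0 n g) (y A) :=
      eulC_succ_eqOn Q hW i0 n hg hAW
    have heul : eulerOpY Q i0 n (eulC Q i0 n g) (y A)
        = Dop Q i0 (eulC Q i0 n g) (y A) - (n : ℂ) * eulC Q i0 n g (y A) := rfl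
    rw [hsucc, heul]
    have hx : A i0 ≠ 0 := hA i0
    have e2 : (-((n+1 : ℕ) : ℤ)) = -(n:ℤ) - 1 := by push_cast; ring
    rw [e2]
    have e1 : (A i0) ^ (-(n:ℤ) - 1) = (A i0) ^ (-(n:ℤ)) * (A i0)⁻¹ := by
      rw [zpow_sub_one₀ hx]
    rw [e1]
    push_cast
    ring

lemma compList_eulC_analytic {l m : ℕ} (Q : Fin l → Fin m → ℤ) {W : Set (Fin l → ℂ)}
    (nf : Fin m → ℕ) (L : List (Fin m)) :
    ∀ g : (Fin l → ℂ) → ℂ, AnalyticOnNhd ℂ g W →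
      AnalyticOnNhd ℂ (compList (L.map (fun i => eulC Q i (nf i))) g) W := by
  induction L with
  | nil => exact fun g hg => hg
  | cons i L ih =>
    intro g hg
    have e : compList ((i :: L).map (fun i => eulC Q i (nf i))) g
        = eulC Q i (nf i) (compList (L.map (fun i => eulC Q i (nf i))) g) := rfl
    rw [e]
    exact eulC_analytic Q i (nf i) _ (ih g hg)

lemma big_step {l m : ℕ} (Q : Fin l → Fin m → ℤ) {W : Set (Fin l → ℂ)} (hW : IsOpen W)
    (y : (Fin m → ℂ) → (Fin l → ℂ))
    (hy : ∀ (A : Fin m → ℂ) (a : Fin l), y A a = ∏ i, (A i) ^ (Q a i))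
    (nf : Fin m → ℕ) (L : List (Fin m)) (hnd : L.Nodup) :
    ∀ g : (Fin l → ℂ) → ℂ, AnalyticOnNhd ℂ g W → ∀ A : Fin m → ℂ, (∀ j, A j ≠ 0) → y A ∈ W →
      compList (L.map (fun i => (pdiff i)^[nf i])) (fun B => g (y B)) A
        = ((L.map (fun j => (A j) ^ (-(nf j : ℤ)))).prod) *
            compList (L.map (fun i => eulC Q i (nf i))) g (y A) := by
  induction L with
  | nil =>
    intro g hg A hA hAW
    simp [compList]
  | cons i L ih =>
    intro g hg A hA hAW
    obtain ⟨hiL, hndL⟩ := List.nodup_cons.mp hnd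
    have hGanal : AnalyticOnNhd ℂ (compList (L.map (fun i => eulC Q i (nf i))) g) W :=
      compList_eulC_analytic Q nf L g hg
    have hev : compList (L.map (fun i => (pdiff i)^[nf i])) (fun B => g (y B))
        =ᶠ[𝓝 A] (fun B => ((L.map (fun j => (B j) ^ (-(nf j : ℤ)))).prod) *
          (compList (L.map (fun i => eulC Q i (nf i))) g) (y B)) := by
      filter_upwards [(S_open Q hW y hy).mem_nhds
        (show A ∈ {B : Fin m → ℂ | (∀ j, B j ≠ 0) ∧ y B ∈ W} from ⟨hA, hAW⟩)] with B hB
      exact ih hndL g hg B hB.1 hB.2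
    calc compList ((i :: L).map (fun i => (pdiff i)^[nf i])) (fun B => g (y B)) A
        = (pdiff i)^[nf i] (compList (L.map (fun i => (pdiff i)^[nf i])) (fun B => g (y B))) A :=
          rfl
      _ = (pdiff i)^[nf i] (fun B => ((L.map (fun j => (B j) ^ (-(nf j : ℤ)))).prod) *
            (compList (L.map (fun i => eulC Q i (nf i))) g) (y B)) A :=
          pdiff_iter_congr _ hev
      _ = ((L.map (fun j => (A j) ^ (-(nf j : ℤ)))).prod) *
            ((A i) ^ (-(nf i : ℤ)) *
              eulC Q i (nf i) (compList (L.map (fun i => eulC Q i (nf i))) g) (y A)) :=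
          iter_pdiff Q hW y hy i L hiL (fun j => -(nf j : ℤ)) (nf i) _ hGanal A hA hAW
      _ = (((i :: L).map (fun j => (A j) ^ (-(nf j : ℤ)))).prod) *
            compList ((i :: L).map (fun i => eulC Q i (nf i))) g (y A) := by
          simp only [List.map_cons, List.prod_cons]
          rw [show compList (eulC Q i (nf i) :: List.map (fun i => eulC Q i (nf i)) L) g
              = eulC Q i (nf i) (compList (List.map (fun i => eulC Q i (nf i)) L) g) from rfl]
          ring

lemma list_filter_prod {m : ℕ} (p : Fin m → Prop) [DecidablePred p] (f : Fin m → ℂ) :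
    (((List.finRange m).filter (fun i => decide (p i))).map f).prod
      = ∏ i ∈ Finset.univ.filter p, f i := by
  simp [Finset.prod, Fin.univ_def, Finset.filter]

lemma zpow_sum0 {x : ℂ} (hx : x ≠ 0) {ι : Type*} (s : Finset ι) (e : ι → ℤ) :
    x ^ (∑ a ∈ s, e a) = ∏ a ∈ s, x ^ (e a) := by
  classical
  induction s using Finset.induction with
  | empty => simp
  | insert _ _ h ih => rw [Finset.sum_insert h, Finset.prod_insert h, zpow_add₀ hx, ih]

lemma scalar_identity {l m : ℕ} (Q : Fin l → Fin m → ℤ) (d : Fin l → ℤ) (ℓ : Fin m → ℤ)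
    (hℓ : ∀ i, ℓ i = ∑ a, Q a i * d a) (y : (Fin m → ℂ) → (Fin l → ℂ))
    (hy : ∀ (A : Fin m → ℂ) (a : Fin l), y A a = ∏ i, (A i) ^ (Q a i))
    (A : Fin m → ℂ) (hA : ∀ i, A i ≠ 0) :
    ((((List.finRange m).filter (fun i => decide (0 < ℓ i))).map
        (fun j => (A j) ^ (-((ℓ j).toNat : ℤ)))).prod) * (∏ a, (y A a) ^ (d a))
      = (((List.finRange m).filter (fun i => decide (ℓ i < 0))).map
          (fun j => (A j) ^ (-((-ℓ j).toNat : ℤ)))).prod := by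
  have hyprod : (∏ a, (y A a) ^ (d a)) = ∏ i, (A i) ^ (ℓ i) := by
    have h1 : ∀ a, (y A a) ^ (d a) = ∏ i, (A i) ^ (Q a i * d a) := by
      intro a
      rw [hy A a, ← Finset.prod_zpow]
      exact Finset.prod_congr rfl (fun i _ => (zpow_mul (A i) (Q a i) (d a)).symm)
    rw [Finset.prod_congr rfl (fun a _ => h1 a), Finset.prod_comm]
    exact Finset.prod_congr rfl (fun i _ => by rw [← zpow_sum0 (hA i), ← hℓ i])
  rw [hyprod, list_filter_prod (fun i => 0 < ℓ i), list_filter_prod (fun i => ℓ i < 0)]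
  have e1 : ∀ i ∈ Finset.univ.filter (fun i => 0 < ℓ i),
      (A i) ^ (-((ℓ i).toNat : ℤ)) = ((A i) ^ (ℓ i))⁻¹ := by
    intro i hi
    rw [Int.toNat_of_nonneg (le_of_lt (Finset.mem_filter.mp hi).2), zpow_neg]
  have e2 : ∀ i ∈ Finset.univ.filter (fun i => ℓ i < 0),
      (A i) ^ (-((-ℓ i).toNat : ℤ)) = (A i) ^ (ℓ i) := by
    intro i hi
    have hneg : (0:ℤ) ≤ -ℓ i := by
      have := (Finset.mem_filter.mp hi).2
      omega
    rw [Int.toNat_of_nonneg hneg, neg_neg]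
  rw [Finset.prod_congr rfl e1, Finset.prod_congr rfl e2]
  have hsub : ∏ i ∈ Finset.univ.filter (fun i => ℓ i < 0), (A i) ^ (ℓ i)
      = ∏ i ∈ Finset.univ.filter (fun i => ¬ 0 < ℓ i), (A i) ^ (ℓ i) := by
    apply Finset.prod_subset
    · intro x hx
      have := (Finset.mem_filter.mp hx).2
      exact Finset.mem_filter.mpr ⟨Finset.mem_univ x, by omega⟩
    · intro x hx hx'
      have h1 := (Finset.mem_filter.mp hx).2
      have h2 : ¬ ℓ x < 0 := fun h => hx' (Finset.mem_filter.mpr ⟨Finset.mem_univ x, h⟩)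
      have : ℓ x = 0 := by omega
      rw [this, zpow_zero]
  have hsplit : (∏ i, (A i) ^ (ℓ i))
      = (∏ i ∈ Finset.univ.filter (fun i => 0 < ℓ i), (A i) ^ (ℓ i)) *
          ∏ i ∈ Finset.univ.filter (fun i => ¬ 0 < ℓ i), (A i) ^ (ℓ i) :=
    (Finset.prod_filter_mul_prod_filter_not Finset.univ _ _).symm
  rw [hsplit, ← hsub, ← mul_assoc, ← Finset.prod_mul_distrib]
  have hone : ∀ i ∈ Finset.univ.filter (fun i => 0 < ℓ i),
      ((A i) ^ (ℓ i))⁻¹ * (A i) ^ (ℓ i) = 1 :=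
    fun i _ => inv_mul_cancel₀ (zpow_ne_zero _ (hA i))
  rw [Finset.prod_congr rfl hone, Finset.prod_const_one, one_mul]

end GKZ

open GKZ

/-- If `Ψ`, analytic on an open subset `W` of the torus `{y | ∀ a, y a ≠ 0}`,
satisfies the Givental-type equation `𝒫_d Ψ = 0`, i.e.
`(∏_{i : ℓ i > 0} ∏_{k=0}^{ℓ i − 1}(𝒟_i − k))Ψ = y^d · (∏_{i : ℓ i < 0} ∏_{k=0}^{−ℓ i − 1}(𝒟_i − k))Ψ`
on `W`, where `ℓ i = Σ_a (Q a i)·(d a)`, then `Φ = Ψ ∘ y` with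
`y(A)_a = ∏_i (A i)^{Q a i}` satisfies the GKZ box equation
`(∏_{i : ℓ i > 0} ∂_i^{ℓ i})Φ(A) = (∏_{i : ℓ i < 0} ∂_i^{−ℓ i})Φ(A)` at every point `A`
of the torus with `y(A) ∈ W`. -/
theorem stmt6 (l m : ℕ) (hl : 0 < l) (hm : 0 < m) (Q : Fin l → Fin m → ℤ)
    (y : (Fin m → ℂ) → (Fin l → ℂ))
    (hy : ∀ (A : Fin m → ℂ) (a : Fin l), y A a = ∏ i, (A i) ^ (Q a i))
    (d : Fin l → ℤ) (ℓ : Fin m → ℤ) (hℓ : ∀ i, ℓ i = ∑ a, Q a i * d a)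
    (W : Set (Fin l → ℂ)) (hWsub : W ⊆ {yy : Fin l → ℂ | ∀ a, yy a ≠ 0})
    (hW : IsOpen W) (Ψ : (Fin l → ℂ) → ℂ) (hΨ : AnalyticOnNhd ℂ Ψ W)
    (hP : ∀ yy ∈ W,
      compList (((List.finRange m).filter (fun i => decide (0 < ℓ i))).map
          (fun i => compList ((List.range (ℓ i).toNat).map (eulerOpY Q i)))) Ψ yy
        = (∏ a, (yy a) ^ (d a)) *
            compList (((List.finRange m).filter (fun i => decide (ℓ i < 0))).map
                (fun i => compList ((List.range (-ℓ i).toNat).map (eulerOpY Q i)))) Ψ yy)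
    (A : Fin m → ℂ) (hA : ∀ i, A i ≠ 0) (hAW : y A ∈ W) :
    compList (((List.finRange m).filter (fun i => decide (0 < ℓ i))).map
        (fun i => (pdiff i)^[(ℓ i).toNat])) (Ψ ∘ y) A
      = compList (((List.finRange m).filter (fun i => decide (ℓ i < 0))).map
          (fun i => (pdiff i)^[(-ℓ i).toNat])) (Ψ ∘ y) A := by
  classical
  have hndpos : ((List.finRange m).filter (fun i => decide (0 < ℓ i))).Nodup :=
    (List.nodup_finRange m).filter _
  have hndneg : ((List.finRange m).filter (fun i => decide (ℓ i < 0))).Nodup :=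
    (List.nodup_finRange m).filter _
  have key1 := big_step Q hW y hy (fun i => (ℓ i).toNat)
    ((List.finRange m).filter (fun i => decide (0 < ℓ i))) hndpos Ψ hΨ A hA hAW
  have key2 := big_step Q hW y hy (fun i => (-ℓ i).toNat)
    ((List.finRange m).filter (fun i => decide (ℓ i < 0))) hndneg Ψ hΨ A hA hAW
  have hp' : compList (((List.finRange m).filter (fun i => decide (0 < ℓ i))).map
        (fun i => eulC Q i (ℓ i).toNat)) Ψ (y A)
      = (∏ a, (y A a) ^ (d a)) *
          compList (((List.finRange m).filter (fun i => decide (ℓ i < 0))).map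
            (fun i => eulC Q i (-ℓ i).toNat)) Ψ (y A) := hP (y A) hAW
  have hscal := scalar_identity Q d ℓ hℓ y hy A hA
  calc compList (((List.finRange m).filter (fun i => decide (0 < ℓ i))).map
        (fun i => (pdiff i)^[(ℓ i).toNat])) (Ψ ∘ y) A
      = ((((List.finRange m).filter (fun i => decide (0 < ℓ i))).map
            (fun j => (A j) ^ (-((ℓ j).toNat : ℤ)))).prod) *
          compList (((List.finRange m).filter (fun i => decide (0 < ℓ i))).map
            (fun i => eulC Q i (ℓ i).toNat)) Ψ (y A) := key1
    _ = ((((List.finRange m).filter (fun i => decide (0 < ℓ i))).map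
            (fun j => (A j) ^ (-((ℓ j).toNat : ℤ)))).prod) *
          ((∏ a, (y A a) ^ (d a)) *
            compList (((List.finRange m).filter (fun i => decide (ℓ i < 0))).map
              (fun i => eulC Q i (-ℓ i).toNat)) Ψ (y A)) := by rw [hp']
    _ = ((((List.finRange m).filter (fun i => decide (ℓ i < 0))).map
            (fun j => (A j) ^ (-((-ℓ j).toNat : ℤ)))).prod) *
          compList (((List.finRange m).filter (fun i => decide (ℓ i < 0))).map
            (fun i => eulC Q i (-ℓ i).toNat)) Ψ (y A) := by
        rw [← mul_assoc, hscal]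
    _ = compList (((List.finRange m).filter (fun i => decide (ℓ i < 0))).map
          (fun i => (pdiff i)^[(-ℓ i).toNat])) (Ψ ∘ y) A := key2.symm
end
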